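/- arXiv:1402.2324 — 2 statements merged into one kernel-verified Lean document; each statement's English description precedes it below -/
import Mathlib

section
/- Let n, d, r be positive integers and C > 0. Let Ω ⊆ {1,…,n}×{1,…,n} be the edge set of a d-regular bipartite graph whose biadjacency matrix G satisfies G1 and G2 with constant C. Let M ∈ ℝ^{n×n} be a rank-r matrix whose thin SVD M = UΣVᵀ satisfies the μ₀-incoherence assumption A1. Then ‖(n/d)·P_Ω(M) − M‖ ≤ (C·μ₀·r/√d)·‖M‖, where ‖·‖ denotes the spectral norm. -/
open Matrix
open scoped BigOperators

noncomputable section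

/-- Euclidean norm of a vector. -/
def vecNorm {β : Type*} [Fintype β] (x : β → ℝ) : ℝ :=
  Real.sqrt (∑ i, x i ^ 2)

/-- Spectral norm (largest singular value) of a real matrix. -/
def specNorm {α β : Type*} [Fintype α] [Fintype β] (A : Matrix α β ℝ) : ℝ :=
  sSup {c | ∃ x : β → ℝ, vecNorm x ≤ 1 ∧ c = vecNorm (A.mulVec x)}

/-- Second largest singular value of a real matrix (Courant–Fischer characterization). -/
def sigma2 {α β : Type*} [Fintype α] [Fintype β] (A : Matrix α β ℝ) : ℝ :=
  ⨅ v : β → ℝ, sSup {c | ∃ x : β → ℝ,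
    vecNorm x ≤ 1 ∧ (∑ i, v i * x i) = 0 ∧ c = vecNorm (A.mulVec x)}

/-- Frobenius norm. -/
def frobNorm {α β : Type*} [Fintype α] [Fintype β] (A : Matrix α β ℝ) : ℝ :=
  Real.sqrt (∑ i, ∑ j, A i j ^ 2)

/-- Nuclear norm: the sum of the singular values, i.e. the trace of `√(AᵀA)`. -/
def nuclearNorm {α β : Type*} [Fintype α] [Fintype β] [DecidableEq β]
    (A : Matrix α β ℝ) : ℝ :=
  ((Matrix.posSemidef_conjTranspose_mul_self A).1.eigenvectorUnitary.1 *
    Matrix.diagonal ((RCLike.ofReal : ℝ → ℝ) ∘ (Real.sqrt ·) ∘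
      (Matrix.posSemidef_conjTranspose_mul_self A).1.eigenvalues) *
    (star (Matrix.posSemidef_conjTranspose_mul_self A).1.eigenvectorUnitary :
      Matrix β β ℝ)).trace

/-- The sampling operator `P_Ω`. -/
def sampl {n : ℕ} (Ω : Finset (Fin n × Fin n)) (M : Matrix (Fin n) (Fin n) ℝ) :
    Matrix (Fin n) (Fin n) ℝ :=
  Matrix.of fun i j => if (i, j) ∈ Ω then M i j else 0

/-- The biadjacency matrix `G` of the bipartite graph with edge set `Ω`. -/
def biadj {n : ℕ} (Ω : Finset (Fin n × Fin n)) : Matrix (Fin n) (Fin n) ℝ :=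
  Matrix.of fun i j => if (i, j) ∈ Ω then (1 : ℝ) else 0

/-- `Ω` is the edge set of a `d`-regular bipartite graph: every row and every column
of `G` has exactly `d` ones. -/
def RegularSampling {n : ℕ} (Ω : Finset (Fin n × Fin n)) (d : ℕ) : Prop :=
  (∀ i : Fin n, (Finset.univ.filter fun j => (i, j) ∈ Ω).card = d) ∧
  (∀ j : Fin n, (Finset.univ.filter fun i => (i, j) ∈ Ω).card = d)

/-- Assumption G1: the all-ones vector is a top left- and right-singular vector of `G`,
with `σ₁(G) = d`. -/
def AssumptionG1 {n : ℕ} (Ω : Finset (Fin n × Fin n)) (d : ℕ) : Prop :=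
  specNorm (biadj Ω) = d ∧
  (biadj Ω).mulVec (fun _ => 1) = (fun _ => (d : ℝ)) ∧
  Matrix.vecMul (fun _ => 1) (biadj Ω) = (fun _ => (d : ℝ))

/-- Assumption G2: `σ₂(G) ≤ C·√d`. -/
def AssumptionG2 {n : ℕ} (Ω : Finset (Fin n × Fin n)) (d : ℕ) (C : ℝ) : Prop :=
  sigma2 (biadj Ω) ≤ C * Real.sqrt d

/-- Assumption A1 (`μ₀`-incoherence) for one factor: every row `U^i` satisfies
`‖U^i‖² ≤ μ₀ r / n`. -/
def IncoherentRows {n r : ℕ} (U : Matrix (Fin n) (Fin r) ℝ) (μ₀ : ℝ) : Prop :=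
  ∀ i : Fin n, (∑ k, U i k ^ 2) ≤ μ₀ * r / n

/-- Assumption A2 (strong incoherence with parameter `δ`) for one factor:
for every `S` with `|S| = d`, `‖(n/d)·∑_{k∈S} U^k (U^k)ᵀ − I‖ ≤ δ`. -/
def StrongIncoherence {n r : ℕ} (U : Matrix (Fin n) (Fin r) ℝ) (d : ℕ) (δ : ℝ) : Prop :=
  ∀ S : Finset (Fin n), S.card = d →
    specNorm (((n : ℝ) / (d : ℝ)) • (∑ k ∈ S, Matrix.vecMulVec (U k) (U k)) - 1) ≤ δ

/-- `M = U · diagonal s · Vᵀ` is a thin SVD of the rank-`r` matrix `M`. -/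
def IsThinSVD {n r : ℕ} (M : Matrix (Fin n) (Fin n) ℝ)
    (U : Matrix (Fin n) (Fin r) ℝ) (s : Fin r → ℝ) (V : Matrix (Fin n) (Fin r) ℝ) : Prop :=
  Uᵀ * U = 1 ∧ Vᵀ * V = 1 ∧ (∀ i, 0 < s i) ∧ M = U * Matrix.diagonal s * Vᵀ

/-- The projection `P_T` onto the subspace `T` spanned by matrices `UXᵀ` and `YVᵀ`. -/
def projT {n r : ℕ} (U V : Matrix (Fin n) (Fin r) ℝ) (Z : Matrix (Fin n) (Fin n) ℝ) :
    Matrix (Fin n) (Fin n) ℝ :=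
  U * Uᵀ * Z + Z * (V * Vᵀ) - U * Uᵀ * Z * (V * Vᵀ)

/-- The projection `P_{T⊥}` onto the orthogonal complement of `T`. -/
def projTperp {n r : ℕ} (U V : Matrix (Fin n) (Fin r) ℝ) (Z : Matrix (Fin n) (Fin n) ℝ) :
    Matrix (Fin n) (Fin n) ℝ :=
  (1 - U * Uᵀ) * Z * (1 - V * Vᵀ)

end



section Helpers

section helpers
variable {α β : Type*} [Fintype α] [Fintype β]

lemma vecNorm_nonneg (x : β → ℝ) : 0 ≤ vecNorm x := Real.sqrt_nonneg _

lemma sq_vecNorm (x : β → ℝ) : vecNorm x ^ 2 = ∑ i, x i ^ 2 :=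
  Real.sq_sqrt (Finset.sum_nonneg fun _ _ => sq_nonneg _)

lemma vecNorm_zero : vecNorm (fun _ => (0:ℝ) : β → ℝ) = 0 := by
  simp [vecNorm]

lemma vecNorm_eq_zero {x : β → ℝ} (h : vecNorm x = 0) : x = 0 := by
  have h2 : ∑ i, x i ^ 2 = 0 := by
    have := sq_vecNorm x
    rw [h] at this; simpa using this.symm
  funext i
  have := (Finset.sum_eq_zero_iff_of_nonneg (fun i _ => sq_nonneg (x i))).1 h2 i (Finset.mem_univ i)
  exact pow_eq_zero_iff (by norm_num) |>.1 this

lemma vecNorm_smul (c : ℝ) (x : β → ℝ) : vecNorm (fun i => c * x i) = |c| * vecNorm x := by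
  unfold vecNorm
  rw [← Real.sqrt_sq_eq_abs, ← Real.sqrt_mul (sq_nonneg c), Finset.mul_sum]
  exact congrArg Real.sqrt (Finset.sum_congr rfl fun i _ => by ring)

lemma vecNorm_le_of_sq_le {x : α → ℝ} {y : β → ℝ} (h : ∑ i, x i ^ 2 ≤ ∑ i, y i ^ 2) :
    vecNorm x ≤ vecNorm y := Real.sqrt_le_sqrt h

lemma abs_sum_mul_le (x y : β → ℝ) : |∑ i, x i * y i| ≤ vecNorm x * vecNorm y := by
  rw [abs_le]
  refine ⟨?_, Real.sum_mul_le_sqrt_mul_sqrt Finset.univ x y⟩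
  have h := Real.sum_mul_le_sqrt_mul_sqrt Finset.univ (fun i => -x i) y
  have e1 : ∑ i, -x i * y i = -∑ i, x i * y i := by
    rw [← Finset.sum_neg_distrib]; exact Finset.sum_congr rfl fun i _ => by ring
  have e2 : ∑ i, (-x i) ^ 2 = ∑ i, x i ^ 2 := Finset.sum_congr rfl fun i _ => by ring
  rw [e1, e2] at h
  unfold vecNorm
  linarith

end helpers

section spec
variable {α β : Type*} [Fintype α] [Fintype β]

lemma sum_sq_le_one_of_vecNorm_le_one {x : β → ℝ} (hx : vecNorm x ≤ 1) :
    ∑ i, x i ^ 2 ≤ 1 := by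
  have h := sq_vecNorm x
  nlinarith [vecNorm_nonneg x]

lemma mulVec_le_frob (A : Matrix α β ℝ) {x : β → ℝ} (hx : vecNorm x ≤ 1) :
    vecNorm (A.mulVec x) ≤ frobNorm A := by
  apply Real.sqrt_le_sqrt
  apply Finset.sum_le_sum
  intro i _
  have cs := Finset.sum_mul_sq_le_sq_mul_sq Finset.univ (fun j => A i j) x
  have hx2 := sum_sq_le_one_of_vecNorm_le_one hx
  have hnn : (0:ℝ) ≤ ∑ j, A i j ^ 2 := Finset.sum_nonneg fun _ _ => sq_nonneg _
  calc (A.mulVec x i) ^ 2 = (∑ j, A i j * x j) ^ 2 := by rfl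
    _ ≤ (∑ j, A i j ^ 2) * ∑ j, x j ^ 2 := cs
    _ ≤ (∑ j, A i j ^ 2) * 1 := by exact mul_le_mul_of_nonneg_left hx2 hnn
    _ = ∑ j, A i j ^ 2 := mul_one _

lemma specSet_nonempty (A : Matrix α β ℝ) :
    {c | ∃ x : β → ℝ, vecNorm x ≤ 1 ∧ c = vecNorm (A.mulVec x)}.Nonempty := by
  refine ⟨vecNorm (A.mulVec 0), 0, ?_, rfl⟩
  have : vecNorm (0 : β → ℝ) = 0 := by exact vecNorm_zero (β := β)
  simp [this]

lemma specSet_bddAbove (A : Matrix α β ℝ) :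
    BddAbove {c | ∃ x : β → ℝ, vecNorm x ≤ 1 ∧ c = vecNorm (A.mulVec x)} := by
  refine ⟨frobNorm A, ?_⟩
  rintro c ⟨x, hx, rfl⟩
  exact mulVec_le_frob A hx

lemma specNorm_nonneg (A : Matrix α β ℝ) : 0 ≤ specNorm A := by
  have h0 : vecNorm (A.mulVec 0) ∈ {c | ∃ x : β → ℝ, vecNorm x ≤ 1 ∧ c = vecNorm (A.mulVec x)} := by
    refine ⟨0, ?_, rfl⟩
    have : vecNorm (0 : β → ℝ) = 0 := by exact vecNorm_zero (β := β)
    simp [this]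
  exact (vecNorm_nonneg _).trans (le_csSup (specSet_bddAbove A) h0)

lemma le_specNorm (A : Matrix α β ℝ) {x : β → ℝ} (hx : vecNorm x ≤ 1) :
    vecNorm (A.mulVec x) ≤ specNorm A :=
  le_csSup (specSet_bddAbove A) ⟨x, hx, rfl⟩

lemma specNorm_le (A : Matrix α β ℝ) {c : ℝ} (hc : 0 ≤ c)
    (h : ∀ x : β → ℝ, vecNorm x ≤ 1 → vecNorm (A.mulVec x) ≤ c) : specNorm A ≤ c := by
  apply Real.sSup_le _ hc
  rintro b ⟨x, hx, rfl⟩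
  exact h x hx

lemma mulVec_vecNorm_le (A : Matrix α β ℝ) (x : β → ℝ) :
    vecNorm (A.mulVec x) ≤ specNorm A * vecNorm x := by
  rcases eq_or_lt_of_le (vecNorm_nonneg x) with h0 | h0
  · have hx0 : x = 0 := vecNorm_eq_zero h0.symm
    subst hx0
    simp only [Matrix.mulVec_zero]
    have : vecNorm (0 : α → ℝ) = 0 := by exact vecNorm_zero (β := α)
    rw [this, ← h0, mul_zero]
  · set t := vecNorm x with ht
    have hx' : vecNorm (fun i => t⁻¹ * x i) = 1 := by
      rw [vecNorm_smul, abs_of_pos (inv_pos.2 h0), inv_mul_cancel₀ (ne_of_gt h0)]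
    have key := le_specNorm A (x := fun i => t⁻¹ * x i) (le_of_eq hx')
    have hmv : A.mulVec (fun i => t⁻¹ * x i) = fun i => t⁻¹ * A.mulVec x i := by
      funext i
      simp only [Matrix.mulVec, dotProduct, Finset.mul_sum]
      exact Finset.sum_congr rfl fun j _ => by ring
    rw [hmv, vecNorm_smul, abs_of_pos (inv_pos.2 h0)] at key
    calc vecNorm (A.mulVec x) = t * (t⁻¹ * vecNorm (A.mulVec x)) := by
          field_simp
      _ ≤ t * specNorm A := mul_le_mul_of_nonneg_left key (le_of_lt h0)
      _ = specNorm A * t := mul_comm _ _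
end spec

section sumcomb
variable {ι : Type*} [Fintype ι]

lemma sum_comb (a b : ℝ) (f g : ι → ℝ) :
    ∑ i, (a * f i + b * g i) = a * (∑ i, f i) + b * (∑ i, g i) := by
  rw [Finset.sum_add_distrib, Finset.mul_sum, Finset.mul_sum]

lemma sum_comb3 (a b c : ℝ) (f g h : ι → ℝ) :
    ∑ i, (a * f i + b * g i + c * h i)
      = a * (∑ i, f i) + b * (∑ i, g i) + c * (∑ i, h i) := by
  rw [Finset.sum_add_distrib, Finset.sum_add_distrib, Finset.mul_sum, Finset.mul_sum,
    Finset.mul_sum]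
end sumcomb

section sigma
variable {n : ℕ}

lemma sig2Set_bddAbove (A : Matrix (Fin n) (Fin n) ℝ) (v : Fin n → ℝ) :
    BddAbove {c | ∃ x : Fin n → ℝ,
      vecNorm x ≤ 1 ∧ (∑ i, v i * x i) = 0 ∧ c = vecNorm (A.mulVec x)} := by
  refine ⟨frobNorm A, ?_⟩
  rintro c ⟨x, hx, -, rfl⟩
  exact mulVec_le_frob A hx

lemma mulVec_le_sigma2 (hn : 0 < n) {d : ℝ}
    (G : Matrix (Fin n) (Fin n) ℝ)
    (hspec : specNorm G = d)
    (hrow : G.mulVec (fun _ => 1) = (fun _ => d))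
    (hcol : Matrix.vecMul (fun _ => 1) G = (fun _ => d))
    {y : Fin n → ℝ} (hy : ∑ i, y i = 0) (hy1 : vecNorm y = 1) :
    vecNorm (G.mulVec y) ≤ sigma2 G := by
  apply le_ciInf
  intro v
  set sn : ℝ := Real.sqrt n with hsn
  have hsnpos : 0 < sn := Real.sqrt_pos.2 (by exact_mod_cast hn)
  have hsnsq : sn ^ 2 = n := Real.sq_sqrt (by positivity)
  set u : Fin n → ℝ := fun _ => sn⁻¹ with hu
  have hGrow' : ∀ i, ∑ j, G i j = d := by
    intro i
    have := congrFun hrow i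
    simpa [Matrix.mulVec, dotProduct] using this
  have hGcol : ∀ j, ∑ i, G i j = d := by
    intro j
    have := congrFun hcol j
    simpa [Matrix.vecMul, dotProduct] using this
  have hysq : ∑ i, y i ^ 2 = 1 := by
    have := sq_vecNorm y; rw [hy1] at this; simpa using this.symm
  have hGu : G.mulVec u = fun _ => sn⁻¹ * d := by
    funext i
    show ∑ j, G i j * sn⁻¹ = sn⁻¹ * d
    rw [← Finset.sum_mul, hGrow' i, mul_comm]
  have hGysum : ∑ i, (G.mulVec y) i = 0 := by
    have h1 : ∑ i, (G.mulVec y) i = ∑ j, (∑ i, G i j) * y j := by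
      simp only [Matrix.mulVec, dotProduct]
      rw [Finset.sum_comm]
      exact Finset.sum_congr rfl fun j _ => by rw [Finset.sum_mul]
    rw [h1, Finset.sum_congr rfl fun j (_ : j ∈ Finset.univ) => by rw [hGcol j],
      ← Finset.mul_sum, hy, mul_zero]
  have hGyd : ∑ i, (G.mulVec y) i ^ 2 ≤ d ^ 2 := by
    have h1 := mulVec_vecNorm_le G y
    rw [hy1, mul_one, hspec] at h1
    have h2 := sq_vecNorm (G.mulVec y)
    nlinarith [vecNorm_nonneg (G.mulVec y)]
  set p : ℝ := ∑ i, v i * u i with hp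
  set q : ℝ := ∑ i, v i * y i with hq
  by_cases hpq : p = 0 ∧ q = 0
  · exact le_csSup (sig2Set_bddAbove G v) ⟨y, le_of_eq hy1, hpq.2, rfl⟩
  · set t : ℝ := Real.sqrt (p ^ 2 + q ^ 2) with htdef
    have hpqpos : 0 < p ^ 2 + q ^ 2 := by
      rcases not_and_or.1 hpq with h | h
      · have : 0 < p ^ 2 := by positivity
        nlinarith [sq_nonneg q]
      · have : 0 < q ^ 2 := by positivity
        nlinarith [sq_nonneg p]
    have htpos : 0 < t := Real.sqrt_pos.2 hpqpos
    have htsq : t ^ 2 = p ^ 2 + q ^ 2 := Real.sq_sqrt (le_of_lt hpqpos)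
    set x : Fin n → ℝ := fun i => t⁻¹ * -q * u i + t⁻¹ * p * y i with hx
    have husq : ∑ i, u i ^ 2 = 1 := by
      simp only [hu]
      rw [Finset.sum_const, Finset.card_univ, Fintype.card_fin, nsmul_eq_mul]
      rw [← hsnsq]; field_simp
    have huy : ∑ i, u i * y i = 0 := by
      simp only [hu]
      rw [← Finset.mul_sum, hy, mul_zero]
    have hxsq : ∑ i, x i ^ 2 = 1 := by
      have step : ∑ i, x i ^ 2
          = (t⁻¹ ^ 2 * q ^ 2) * (∑ i, u i ^ 2) + (t⁻¹ ^ 2 * p ^ 2) * (∑ i, y i ^ 2)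
            + (-(2 * t⁻¹ ^ 2 * p * q)) * (∑ i, u i * y i) := by
        rw [← sum_comb3]
        exact Finset.sum_congr rfl fun i _ => by simp only [hx]; ring
      rw [step, husq, hysq, huy, mul_one, mul_one, mul_zero, add_zero, ← mul_add, add_comm (q ^ 2) (p ^ 2), ← htsq]
      field_simp
    have hx1 : vecNorm x = 1 := by
      unfold vecNorm; rw [hxsq, Real.sqrt_one]
    have hxv : ∑ i, v i * x i = 0 := by
      have step : ∑ i, v i * x i
          = (t⁻¹ * -q) * (∑ i, v i * u i) + (t⁻¹ * p) * (∑ i, v i * y i) := by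
        rw [← sum_comb]
        exact Finset.sum_congr rfl fun i _ => by simp only [hx]; ring
      rw [step, ← hp, ← hq]; ring
    have hGx : G.mulVec x = fun i =>
        (t⁻¹ * -q) * (G.mulVec u) i + (t⁻¹ * p) * (G.mulVec y) i := by
      funext i
      show ∑ j, G i j * x j = _
      have step : ∑ j, G i j * x j
          = (t⁻¹ * -q) * (∑ j, G i j * u j) + (t⁻¹ * p) * (∑ j, G i j * y j) := by
        rw [← sum_comb]
        exact Finset.sum_congr rfl fun j _ => by simp only [hx]; ring
      exact step
    have hGusq : ∑ i, ((G.mulVec u) i) ^ 2 = d ^ 2 := by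
      simp only [hGu]
      rw [Finset.sum_const, Finset.card_univ, Fintype.card_fin, nsmul_eq_mul]
      rw [← hsnsq]; field_simp
    have hGuGy : ∑ i, (G.mulVec u) i * (G.mulVec y) i = 0 := by
      simp only [hGu]
      rw [← Finset.mul_sum, hGysum, mul_zero]
    have hGxsq : ∑ i, (G.mulVec x) i ^ 2
        = (t⁻¹ ^ 2 * q ^ 2) * d ^ 2 + (t⁻¹ ^ 2 * p ^ 2) * (∑ i, (G.mulVec y) i ^ 2) := by
      have step : ∑ i, (G.mulVec x) i ^ 2
          = (t⁻¹ ^ 2 * q ^ 2) * (∑ i, ((G.mulVec u) i) ^ 2)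
            + (t⁻¹ ^ 2 * p ^ 2) * (∑ i, (G.mulVec y) i ^ 2)
            + (-(2 * t⁻¹ ^ 2 * p * q)) * (∑ i, (G.mulVec u) i * (G.mulVec y) i) := by
        rw [← sum_comb3]
        refine Finset.sum_congr rfl fun i _ => ?_
        rw [hGx]; ring
      rw [step, hGusq, hGuGy, mul_zero, add_zero]
    have hmain : vecNorm (G.mulVec y) ≤ vecNorm (G.mulVec x) := by
      apply vecNorm_le_of_sq_le
      rw [hGxsq]
      have hti : t⁻¹ ^ 2 * t ^ 2 = 1 := by field_simp
      set S : ℝ := ∑ i, (G.mulVec y) i ^ 2 with hS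
      have hti0 : 0 ≤ t⁻¹ ^ 2 := sq_nonneg _
      have key : t ^ 2 * S ≤ q ^ 2 * d ^ 2 + p ^ 2 * S := by nlinarith [hGyd, sq_nonneg q]
      have h2 : S = t⁻¹ ^ 2 * (t ^ 2 * S) := by rw [← mul_assoc, hti, one_mul]
      calc S = t⁻¹ ^ 2 * (t ^ 2 * S) := h2
        _ ≤ t⁻¹ ^ 2 * (q ^ 2 * d ^ 2 + p ^ 2 * S) := mul_le_mul_of_nonneg_left key hti0
        _ = t⁻¹ ^ 2 * q ^ 2 * d ^ 2 + t⁻¹ ^ 2 * p ^ 2 * S := by ring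
    exact hmain.trans (le_csSup (sig2Set_bddAbove G v) ⟨x, le_of_eq hx1, hxv, rfl⟩)
end sigma

section Ebound
variable {n : ℕ}

lemma sigma2_nonneg (A : Matrix (Fin n) (Fin n) ℝ) : 0 ≤ sigma2 A := by
  apply Real.iInf_nonneg
  intro v
  have h0 : vecNorm (A.mulVec 0) ∈ {c | ∃ x : Fin n → ℝ,
      vecNorm x ≤ 1 ∧ (∑ i, v i * x i) = 0 ∧ c = vecNorm (A.mulVec x)} := by
    refine ⟨0, ?_, by simp, rfl⟩
    have : vecNorm (0 : Fin n → ℝ) = 0 := by exact vecNorm_zero (β := Fin n)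
    simp [this]
  exact (vecNorm_nonneg _).trans (le_csSup (sig2Set_bddAbove A v) h0)

/-- Homogeneous version of `mulVec_le_sigma2`. -/
lemma mulVec_le_sigma2' (hn : 0 < n) {d : ℝ}
    (G : Matrix (Fin n) (Fin n) ℝ)
    (hspec : specNorm G = d)
    (hrow : G.mulVec (fun _ => 1) = (fun _ => d))
    (hcol : Matrix.vecMul (fun _ => 1) G = (fun _ => d))
    {z : Fin n → ℝ} (hz : ∑ i, z i = 0) :
    vecNorm (G.mulVec z) ≤ sigma2 G * vecNorm z := by
  rcases eq_or_lt_of_le (vecNorm_nonneg z) with h0 | h0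
  · have hz0 : z = 0 := vecNorm_eq_zero h0.symm
    subst hz0
    have h1 : vecNorm (0 : Fin n → ℝ) = 0 := by exact vecNorm_zero (β := Fin n)
    simp [Matrix.mulVec_zero, h1]
  · set t := vecNorm z with ht
    have hsum : ∑ i, t⁻¹ * z i = 0 := by rw [← Finset.mul_sum, hz, mul_zero]
    have hnorm : vecNorm (fun i => t⁻¹ * z i) = 1 := by
      rw [vecNorm_smul, abs_of_pos (inv_pos.2 h0), inv_mul_cancel₀ (ne_of_gt h0)]
    have key := mulVec_le_sigma2 hn G hspec hrow hcol hsum hnorm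
    have hmv : G.mulVec (fun i => t⁻¹ * z i) = fun i => t⁻¹ * G.mulVec z i := by
      funext i
      simp only [Matrix.mulVec, dotProduct, Finset.mul_sum]
      exact Finset.sum_congr rfl fun j _ => by ring
    rw [hmv, vecNorm_smul, abs_of_pos (inv_pos.2 h0)] at key
    calc vecNorm (G.mulVec z) = t * (t⁻¹ * vecNorm (G.mulVec z)) := by field_simp
      _ ≤ t * sigma2 G := mul_le_mul_of_nonneg_left key (le_of_lt h0)
      _ = sigma2 G * t := mul_comm _ _

/-- The deviation matrix `E = (n/d)·G − J` satisfies `‖Ex‖ ≤ (n/d)·σ₂(G)·‖x‖`. -/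
lemma E_mulVec_bound (hn : 0 < n) {d : ℝ} (hd : 0 < d)
    (G : Matrix (Fin n) (Fin n) ℝ)
    (hspec : specNorm G = d)
    (hrow : G.mulVec (fun _ => 1) = (fun _ => d))
    (hcol : Matrix.vecMul (fun _ => 1) G = (fun _ => d))
    (x : Fin n → ℝ) :
    vecNorm ((Matrix.of fun i j => (n : ℝ) / d * G i j - 1).mulVec x)
      ≤ (n : ℝ) / d * sigma2 G * vecNorm x := by
  set E : Matrix (Fin n) (Fin n) ℝ := Matrix.of fun i j => (n : ℝ) / d * G i j - 1 with hE
  set α : ℝ := (∑ i, x i) / n with hα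
  set z : Fin n → ℝ := fun i => x i - α with hzdef
  have hnR : (0:ℝ) < n := by exact_mod_cast hn
  have hz : ∑ i, z i = 0 := by
    simp only [hzdef]
    rw [Finset.sum_sub_distrib, Finset.sum_const, Finset.card_univ, Fintype.card_fin,
      nsmul_eq_mul, hα]
    field_simp
    ring
  have hGrow' : ∀ i, ∑ j, G i j = d := by
    intro i
    have := congrFun hrow i
    simpa [Matrix.mulVec, dotProduct] using this
  -- E x = (n/d) • (G z)
  have hEx : E.mulVec x = fun i => (n : ℝ) / d * (G.mulVec z) i := by
    funext i
    show ∑ j, E i j * x j = (n : ℝ) / d * ∑ j, G i j * z j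
    have expand : ∀ j, E i j * x j
        = (n : ℝ) / d * (G i j * z j) + α * ((n : ℝ) / d) * G i j + -x j := by
      intro j
      show ((n : ℝ) / d * G i j - 1) * x j = _
      simp only [hzdef]
      field_simp
      ring
    rw [Finset.sum_congr rfl fun j _ => expand j]
    rw [Finset.sum_add_distrib, Finset.sum_add_distrib, ← Finset.mul_sum, ← Finset.mul_sum,
      Finset.sum_neg_distrib, hGrow' i]
    have hsx : ∑ j, x j = α * n := by rw [hα]; field_simp
    rw [hsx]
    field_simp
    ring
  rw [hEx, vecNorm_smul, abs_of_pos (by positivity : (0:ℝ) < (n:ℝ)/d)]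
  have key := mulVec_le_sigma2' hn G hspec hrow hcol hz
  have hzx : vecNorm z ≤ vecNorm x := by
    apply vecNorm_le_of_sq_le
    have expand : ∀ i, z i ^ 2 = x i ^ 2 - 2 * α * x i + α ^ 2 := by
      intro i; simp only [hzdef]; ring
    rw [Finset.sum_congr rfl fun i _ => expand i]
    rw [Finset.sum_add_distrib, Finset.sum_sub_distrib, ← Finset.mul_sum,
      Finset.sum_const, Finset.card_univ, Fintype.card_fin, nsmul_eq_mul]
    have hsx : ∑ j, x j = α * n := by rw [hα]; field_simp
    rw [hsx]
    nlinarith [sq_nonneg α, hnR]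
  calc (n : ℝ) / d * vecNorm (G.mulVec z)
      ≤ (n : ℝ) / d * (sigma2 G * vecNorm z) :=
        mul_le_mul_of_nonneg_left key (by positivity)
    _ ≤ (n : ℝ) / d * (sigma2 G * vecNorm x) := by
        apply mul_le_mul_of_nonneg_left _ (by positivity)
        exact mul_le_mul_of_nonneg_left hzx (sigma2_nonneg G)
    _ = (n : ℝ) / d * sigma2 G * vecNorm x := by ring
end Ebound

section svd
variable {n r : ℕ}

lemma col_orth {V : Matrix (Fin n) (Fin r) ℝ} (hV : Vᵀ * V = 1) (k l : Fin r) :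
    ∑ j, V j k * V j l = if k = l then (1:ℝ) else 0 := by
  have h := congrFun (congrFun hV k) l
  simp only [Matrix.mul_apply, Matrix.transpose_apply] at h
  rw [h, Matrix.one_apply]

lemma M_entry {M : Matrix (Fin n) (Fin n) ℝ} {U V : Matrix (Fin n) (Fin r) ℝ}
    {s : Fin r → ℝ} (hM : M = U * Matrix.diagonal s * Vᵀ) (i j : Fin n) :
    M i j = ∑ k, U i k * s k * V j k := by
  rw [hM]
  simp only [Matrix.mul_apply, Matrix.transpose_apply, Matrix.diagonal_apply, mul_ite,
    mul_zero, ite_mul, zero_mul, Finset.sum_ite_eq, Finset.sum_ite_eq', Finset.mem_univ,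
    if_true]

lemma sval_le_specNorm {M : Matrix (Fin n) (Fin n) ℝ} {U V : Matrix (Fin n) (Fin r) ℝ}
    {s : Fin r → ℝ} (hU : Uᵀ * U = 1) (hV : Vᵀ * V = 1) (hs : ∀ k, 0 < s k)
    (hM : M = U * Matrix.diagonal s * Vᵀ) (k : Fin r) :
    s k ≤ specNorm M := by
  set x : Fin n → ℝ := fun j => V j k with hx
  have hxnorm : vecNorm x = 1 := by
    unfold vecNorm
    have : ∑ j, x j ^ 2 = 1 := by
      have h : ∑ j, V j k * V j k = 1 := by simpa using col_orth hV k k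
      rw [← h]
      exact Finset.sum_congr rfl fun j _ => by ring
    rw [this, Real.sqrt_one]
  have hMx : M.mulVec x = fun i => s k * U i k := by
    funext i
    show ∑ j, M i j * x j = s k * U i k
    have step : ∑ j, M i j * x j = ∑ j, ∑ l, U i l * s l * (V j l * V j k) := by
      refine Finset.sum_congr rfl fun j _ => ?_
      rw [M_entry hM i j, Finset.sum_mul]
      exact Finset.sum_congr rfl fun l _ => by simp only [hx]; ring
    rw [step, Finset.sum_comm]
    have inner : ∀ l, ∑ j, U i l * s l * (V j l * V j k)
        = U i l * s l * (if l = k then (1:ℝ) else 0) := by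
      intro l
      rw [← Finset.mul_sum, col_orth hV l k]
    rw [Finset.sum_congr rfl fun l _ => inner l]
    simp only [mul_ite, mul_one, mul_zero]
    rw [Finset.sum_ite_eq' Finset.univ k fun l => U i l * s l]
    simp [mul_comm]
  have hnorm2 : vecNorm (M.mulVec x) = s k := by
    rw [hMx]
    have h1 := vecNorm_smul (s k) (fun i => U i k)
    rw [h1, abs_of_pos (hs k)]
    have h2 : vecNorm (fun i => U i k) = 1 := by
      unfold vecNorm
      have h : ∑ i, U i k * U i k = 1 := by simpa using col_orth hU k k
      have h2 : ∑ i, U i k ^ 2 = 1 := by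
        rw [← h]; exact Finset.sum_congr rfl fun i _ => by ring
      rw [h2, Real.sqrt_one]
    rw [h2, mul_one]
  calc s k = vecNorm (M.mulVec x) := hnorm2.symm
    _ ≤ specNorm M := le_specNorm M (le_of_eq hxnorm)
end svd

section bilinear
variable {n r : ℕ}

lemma specNorm_le_of_bilinear (D : Matrix (Fin n) (Fin n) ℝ) {c : ℝ} (hc : 0 ≤ c)
    (h : ∀ x y : Fin n → ℝ, |∑ i, ∑ j, y i * D i j * x j| ≤ c * (vecNorm y * vecNorm x)) :
    specNorm D ≤ c := by
  apply specNorm_le D hc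
  intro x hx
  set w : Fin n → ℝ := D.mulVec x with hw
  have hsum : ∑ i, w i ^ 2 = ∑ i, ∑ j, w i * D i j * x j := by
    refine Finset.sum_congr rfl fun i _ => ?_
    have : w i ^ 2 = w i * ∑ j, D i j * x j := by
      rw [sq]; rfl
    rw [this, Finset.mul_sum]
    exact Finset.sum_congr rfl fun j _ => by ring
  have h2 : vecNorm w ^ 2 ≤ c * vecNorm w := by
    rw [sq_vecNorm, hsum]
    calc ∑ i, ∑ j, w i * D i j * x j ≤ |∑ i, ∑ j, w i * D i j * x j| := le_abs_self _
      _ ≤ c * (vecNorm w * vecNorm x) := h x w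
      _ ≤ c * (vecNorm w * 1) := by
          apply mul_le_mul_of_nonneg_left _ hc
          exact mul_le_mul_of_nonneg_left hx (vecNorm_nonneg w)
      _ = c * vecNorm w := by rw [mul_one]
  by_contra hlt
  push_neg at hlt
  nlinarith [vecNorm_nonneg w, h2]

lemma bilinear_bound {E M : Matrix (Fin n) (Fin n) ℝ} {U V : Matrix (Fin n) (Fin r) ℝ}
    {s : Fin r → ℝ} {L K : ℝ}
    (hM : ∀ i j, M i j = ∑ k, U i k * s k * V j k)
    (hs : ∀ k, 0 < s k) (hsσ : ∀ k, s k ≤ specNorm M)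
    (hL : 0 ≤ L) (hLb : ∀ b : Fin n → ℝ, vecNorm (E.mulVec b) ≤ L * vecNorm b)
    (hK : 0 ≤ K)
    (hA1U : ∀ i, ∑ k, U i k ^ 2 ≤ K) (hA1V : ∀ j, ∑ k, V j k ^ 2 ≤ K)
    (x y : Fin n → ℝ) :
    |∑ i, ∑ j, y i * (E i j * M i j) * x j|
      ≤ L * (specNorm M * K) * (vecNorm y * vecNorm x) := by
  set σ : ℝ := specNorm M with hσ
  have hσ0 : 0 ≤ σ := specNorm_nonneg M
  set a : Fin r → Fin n → ℝ := fun k i => y i * U i k with ha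
  set b : Fin r → Fin n → ℝ := fun k j => x j * V j k with hb
  -- rewrite the double sum
  have key : ∑ i, ∑ j, y i * (E i j * M i j) * x j
      = ∑ k, s k * (∑ i, a k i * (E.mulVec (b k)) i) := by
    have step1 : ∀ i, ∑ j, y i * (E i j * M i j) * x j
        = ∑ k, s k * (a k i * ∑ j, E i j * b k j) := by
      intro i
      have inner : ∀ j, y i * (E i j * M i j) * x j
          = ∑ k, s k * (a k i * (E i j * b k j)) := by
        intro j
        rw [hM i j]
        simp only [Finset.mul_sum, Finset.sum_mul]
        refine Finset.sum_congr rfl fun k _ => ?_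
        simp only [ha, hb]; ring
      rw [Finset.sum_congr rfl fun j _ => inner j, Finset.sum_comm]
      refine Finset.sum_congr rfl fun k _ => ?_
      simp only [Finset.mul_sum]
    rw [Finset.sum_congr rfl fun i _ => step1 i, Finset.sum_comm]
    refine Finset.sum_congr rfl fun k _ => ?_
    rw [← Finset.mul_sum]
    simp only [Matrix.mulVec, dotProduct]
  rw [key]
  -- bound each term
  have term_bound : ∀ k, |s k * (∑ i, a k i * (E.mulVec (b k)) i)|
      ≤ s k * (vecNorm (a k) * (L * vecNorm (b k))) := by
    intro k
    rw [abs_mul, abs_of_pos (hs k)]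
    apply mul_le_mul_of_nonneg_left _ (le_of_lt (hs k))
    calc |∑ i, a k i * (E.mulVec (b k)) i|
        ≤ vecNorm (a k) * vecNorm (E.mulVec (b k)) := abs_sum_mul_le _ _
      _ ≤ vecNorm (a k) * (L * vecNorm (b k)) :=
          mul_le_mul_of_nonneg_left (hLb (b k)) (vecNorm_nonneg _)
  have abs_le_sum : |∑ k, s k * (∑ i, a k i * (E.mulVec (b k)) i)|
      ≤ ∑ k, s k * (vecNorm (a k) * (L * vecNorm (b k))) :=
    (Finset.abs_sum_le_sum_abs _ _).trans (Finset.sum_le_sum fun k _ => term_bound k)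
  apply abs_le_sum.trans
  -- Cauchy-Schwarz over k
  have rearr : ∀ k, s k * (vecNorm (a k) * (L * vecNorm (b k)))
      = L * ((Real.sqrt (s k) * vecNorm (a k)) * (Real.sqrt (s k) * vecNorm (b k))) := by
    intro k
    have h1 : Real.sqrt (s k) * Real.sqrt (s k) = s k :=
      Real.mul_self_sqrt (le_of_lt (hs k))
    calc s k * (vecNorm (a k) * (L * vecNorm (b k)))
        = (Real.sqrt (s k) * Real.sqrt (s k)) * (vecNorm (a k) * (L * vecNorm (b k))) := by
          rw [h1]
      _ = L * ((Real.sqrt (s k) * vecNorm (a k)) * (Real.sqrt (s k) * vecNorm (b k))) := by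
          ring
  rw [Finset.sum_congr rfl fun k _ => rearr k, ← Finset.mul_sum]
  have cs := Real.sum_mul_le_sqrt_mul_sqrt Finset.univ
    (fun k => Real.sqrt (s k) * vecNorm (a k)) (fun k => Real.sqrt (s k) * vecNorm (b k))
  have sqA : ∀ k, (Real.sqrt (s k) * vecNorm (a k)) ^ 2 = s k * (∑ i, a k i ^ 2) := by
    intro k
    rw [mul_pow, Real.sq_sqrt (le_of_lt (hs k)), sq_vecNorm]
  have sqB : ∀ k, (Real.sqrt (s k) * vecNorm (b k)) ^ 2 = s k * (∑ j, b k j ^ 2) := by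
    intro k
    rw [mul_pow, Real.sq_sqrt (le_of_lt (hs k)), sq_vecNorm]
  -- weighted column sums
  have innerU : ∀ i, ∑ k, s k * U i k ^ 2 ≤ σ * K := by
    intro i
    calc ∑ k, s k * U i k ^ 2 ≤ ∑ k, σ * U i k ^ 2 :=
          Finset.sum_le_sum fun k _ => mul_le_mul_of_nonneg_right (hsσ k) (sq_nonneg _)
      _ = σ * ∑ k, U i k ^ 2 := (Finset.mul_sum _ _ _).symm
      _ ≤ σ * K := mul_le_mul_of_nonneg_left (hA1U i) hσ0
  have innerV : ∀ j, ∑ k, s k * V j k ^ 2 ≤ σ * K := by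
    intro j
    calc ∑ k, s k * V j k ^ 2 ≤ ∑ k, σ * V j k ^ 2 :=
          Finset.sum_le_sum fun k _ => mul_le_mul_of_nonneg_right (hsσ k) (sq_nonneg _)
      _ = σ * ∑ k, V j k ^ 2 := (Finset.mul_sum _ _ _).symm
      _ ≤ σ * K := mul_le_mul_of_nonneg_left (hA1V j) hσ0
  have sumA : ∑ k, s k * (∑ i, a k i ^ 2) ≤ σ * K * (∑ i, y i ^ 2) := by
    have swap : ∑ k, s k * (∑ i, a k i ^ 2) = ∑ i, y i ^ 2 * (∑ k, s k * U i k ^ 2) :=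
      calc ∑ k, s k * (∑ i, a k i ^ 2) = ∑ k, ∑ i, y i ^ 2 * (s k * U i k ^ 2) := by
            refine Finset.sum_congr rfl fun k _ => ?_
            rw [Finset.mul_sum]
            refine Finset.sum_congr rfl fun i _ => by simp only [ha]; ring
        _ = ∑ i, ∑ k, y i ^ 2 * (s k * U i k ^ 2) := Finset.sum_comm
        _ = ∑ i, y i ^ 2 * (∑ k, s k * U i k ^ 2) := by
            refine Finset.sum_congr rfl fun i _ => (Finset.mul_sum _ _ _).symm
    rw [swap]
    calc ∑ i, y i ^ 2 * (∑ k, s k * U i k ^ 2) ≤ ∑ i, y i ^ 2 * (σ * K) :=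
          Finset.sum_le_sum fun i _ => mul_le_mul_of_nonneg_left (innerU i) (sq_nonneg _)
      _ = σ * K * (∑ i, y i ^ 2) := by rw [← Finset.sum_mul]; ring
  have sumB : ∑ k, s k * (∑ j, b k j ^ 2) ≤ σ * K * (∑ j, x j ^ 2) := by
    have swap : ∑ k, s k * (∑ j, b k j ^ 2) = ∑ j, x j ^ 2 * (∑ k, s k * V j k ^ 2) :=
      calc ∑ k, s k * (∑ j, b k j ^ 2) = ∑ k, ∑ j, x j ^ 2 * (s k * V j k ^ 2) := by
            refine Finset.sum_congr rfl fun k _ => ?_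
            rw [Finset.mul_sum]
            refine Finset.sum_congr rfl fun j _ => by simp only [hb]; ring
        _ = ∑ j, ∑ k, x j ^ 2 * (s k * V j k ^ 2) := Finset.sum_comm
        _ = ∑ j, x j ^ 2 * (∑ k, s k * V j k ^ 2) := by
            refine Finset.sum_congr rfl fun j _ => (Finset.mul_sum _ _ _).symm
    rw [swap]
    calc ∑ j, x j ^ 2 * (∑ k, s k * V j k ^ 2) ≤ ∑ j, x j ^ 2 * (σ * K) :=
          Finset.sum_le_sum fun j _ => mul_le_mul_of_nonneg_left (innerV j) (sq_nonneg _)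
      _ = σ * K * (∑ j, x j ^ 2) := by rw [← Finset.sum_mul]; ring
  rw [Finset.sum_congr rfl fun k (_ : k ∈ Finset.univ) => sqA k,
      Finset.sum_congr rfl fun k (_ : k ∈ Finset.univ) => sqB k] at cs
  have hσK : 0 ≤ σ * K := mul_nonneg hσ0 hK
  have m1 : Real.sqrt (∑ k, s k * (∑ i, a k i ^ 2)) ≤ Real.sqrt (σ * K) * vecNorm y := by
    have : Real.sqrt (σ * K) * vecNorm y = Real.sqrt (σ * K * (∑ i, y i ^ 2)) := by
      unfold vecNorm
      rw [← Real.sqrt_mul hσK]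
    rw [this]
    exact Real.sqrt_le_sqrt sumA
  have m2 : Real.sqrt (∑ k, s k * (∑ j, b k j ^ 2)) ≤ Real.sqrt (σ * K) * vecNorm x := by
    have : Real.sqrt (σ * K) * vecNorm x = Real.sqrt (σ * K * (∑ j, x j ^ 2)) := by
      unfold vecNorm
      rw [← Real.sqrt_mul hσK]
    rw [this]
    exact Real.sqrt_le_sqrt sumB
  have prod_bound : ∑ k, (Real.sqrt (s k) * vecNorm (a k)) * (Real.sqrt (s k) * vecNorm (b k))
      ≤ σ * K * (vecNorm y * vecNorm x) := by
    apply cs.trans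
    calc Real.sqrt (∑ k, s k * (∑ i, a k i ^ 2)) * Real.sqrt (∑ k, s k * (∑ j, b k j ^ 2))
        ≤ (Real.sqrt (σ * K) * vecNorm y) * (Real.sqrt (σ * K) * vecNorm x) := by
          exact mul_le_mul m1 m2 (Real.sqrt_nonneg _)
            (mul_nonneg (Real.sqrt_nonneg _) (vecNorm_nonneg _))
      _ = (Real.sqrt (σ * K) * Real.sqrt (σ * K)) * (vecNorm y * vecNorm x) := by ring
      _ = σ * K * (vecNorm y * vecNorm x) := by rw [Real.mul_self_sqrt hσK]
  calc L * ∑ k, (Real.sqrt (s k) * vecNorm (a k)) * (Real.sqrt (s k) * vecNorm (b k))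
      ≤ L * (σ * K * (vecNorm y * vecNorm x)) := mul_le_mul_of_nonneg_left prod_bound hL
    _ = L * (σ * K) * (vecNorm y * vecNorm x) := by ring
end bilinear

end Helpers

/-- spectral-norm approximation of `M` by `(n/d)·P_Ω(M)`. -/
theorem stmt_0 {n d r : ℕ} (hn : 0 < n) (hd : 0 < d) (hr : 0 < r) {C μ₀ : ℝ} (hC : 0 < C)
    (Ω : Finset (Fin n × Fin n)) (hreg : RegularSampling Ω d)
    (hG1 : AssumptionG1 Ω d) (hG2 : AssumptionG2 Ω d C)
    (M : Matrix (Fin n) (Fin n) ℝ) (U V : Matrix (Fin n) (Fin r) ℝ) (s : Fin r → ℝ)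
    (hSVD : IsThinSVD M U s V) (hrank : M.rank = r)
    (hA1U : IncoherentRows U μ₀) (hA1V : IncoherentRows V μ₀) :
    specNorm (((n : ℝ) / (d : ℝ)) • sampl Ω M - M) ≤
      C * μ₀ * r / Real.sqrt d * specNorm M := by
  obtain ⟨hU, hV, hs, hM⟩ := hSVD
  obtain ⟨hspec, hrow, hcol⟩ := hG1
  set G : Matrix (Fin n) (Fin n) ℝ := biadj Ω with hGdef
  have hd0 : (0:ℝ) < (d:ℝ) := by exact_mod_cast hd
  have hn0 : (0:ℝ) < (n:ℝ) := by exact_mod_cast hn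
  set t : ℝ := Real.sqrt (d:ℝ) with htdef
  have ht0 : 0 < t := Real.sqrt_pos.2 hd0
  have htd : t * t = (d:ℝ) := Real.mul_self_sqrt (le_of_lt hd0)
  set E : Matrix (Fin n) (Fin n) ℝ := Matrix.of fun i j => (n : ℝ) / d * G i j - 1 with hEdef
  set σ : ℝ := specNorm M with hσdef
  have hσ0 : 0 ≤ σ := specNorm_nonneg M
  set K : ℝ := μ₀ * r / n with hKdef
  have hK : 0 ≤ K := le_trans (Finset.sum_nonneg fun k _ => sq_nonneg _) (hA1U ⟨0, hn⟩)
  set L : ℝ := (n : ℝ) / d * sigma2 G with hLdef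
  have hL : 0 ≤ L := mul_nonneg (by positivity) (sigma2_nonneg G)
  have hLb : ∀ b : Fin n → ℝ, vecNorm (E.mulVec b) ≤ L * vecNorm b := fun b =>
    E_mulVec_bound hn hd0 G hspec hrow hcol b
  have hMentry : ∀ i j, M i j = ∑ k, U i k * s k * V j k := M_entry hM
  have hsσ : ∀ k, s k ≤ σ := fun k => sval_le_specNorm hU hV hs hM k
  -- identify the deviation matrix
  have hDE : ((n : ℝ) / (d : ℝ)) • sampl Ω M - M = Matrix.of fun i j => E i j * M i j := by
    ext i j
    simp only [Matrix.sub_apply, Matrix.smul_apply, smul_eq_mul, Matrix.of_apply,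
      sampl, biadj, hEdef, hGdef]
    by_cases hmem : (i, j) ∈ Ω
    · simp only [Matrix.of_apply, if_pos hmem]; ring
    · simp only [Matrix.of_apply, if_neg hmem]; ring
  rw [hDE]
  have step1 : specNorm (Matrix.of fun i j => E i j * M i j) ≤ L * (σ * K) := by
    apply specNorm_le_of_bilinear _ (mul_nonneg hL (mul_nonneg hσ0 hK))
    intro x y
    have hb := bilinear_bound (E := E) hMentry hs hsσ hL hLb hK
      (fun i => hA1U i) (fun j => hA1V j) x y
    simpa [Matrix.of_apply] using hb
  have step2 : L * (σ * K) ≤ (n : ℝ) / d * (C * t) * (σ * K) := by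
    apply mul_le_mul_of_nonneg_right _ (mul_nonneg hσ0 hK)
    exact mul_le_mul_of_nonneg_left hG2 (by positivity)
  have step3 : (n : ℝ) / d * (C * t) * (σ * K) = C * μ₀ * r / t * σ := by
    rw [hKdef, ← htd]
    field_simp
  calc specNorm (Matrix.of fun i j => E i j * M i j)
      ≤ L * (σ * K) := step1
    _ ≤ (n : ℝ) / d * (C * t) * (σ * K) := step2
    _ = C * μ₀ * r / t * σ := step3
end

section
/- Let U ∈ ℝ^{n×r} have orthonormal columns and satisfy ‖U^l‖² ≤ μ₀r/n for every row l. Fix an index i and let û = U·U^i ∈ ℝ^n, i.e., û_l = ⟨U^i, U^l⟩ for each l. Then ∑_{k=1}^r ‖û.U_k‖² ≤ (μ₀r/n)², where U_k is the k-th column of U and û.U_k denotes the Hadamard (entrywise) product, (û.U_k)_l = û_l·U_{lk}. -/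
open Matrix
open scoped BigOperators

/-- `∑_k ‖û.U_k‖² ≤ (μ₀ r / n)²` where `û = U·U^i`. -/
theorem stmt_15 {n r : ℕ} {μ₀ : ℝ} (U : Matrix (Fin n) (Fin r) ℝ) (hU : Uᵀ * U = 1)
    (hinc : ∀ l : Fin n, (∑ k, U l k ^ 2) ≤ μ₀ * r / n) (i : Fin n) :
    (∑ k : Fin r, ∑ l : Fin n, ((∑ m, U i m * U l m) * U l k) ^ 2) ≤
      (μ₀ * r / n) ^ 2 := by
  rcases Nat.eq_zero_or_pos n with hn | hn
  · subst hn
    simp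
  set c : ℝ := μ₀ * r / n with hc
  have hc0 : 0 ≤ c := le_trans (Finset.sum_nonneg fun k _ => sq_nonneg _) (hinc i)
  set u : Fin n → ℝ := fun l => ∑ m, U i m * U l m with hu
  have key : ∑ l, u l ^ 2 = ∑ m, U i m ^ 2 := by
    have hUe : ∀ m p : Fin r, (∑ l, U l m * U l p) = if m = p then (1:ℝ) else 0 := by
      intro m p
      have := congrFun (congrFun hU m) p
      simpa [Matrix.mul_apply, Matrix.one_apply, Matrix.transpose_apply] using this
    calc ∑ l, u l ^ 2
        = ∑ l, ∑ m, ∑ p, (U i m * U i p) * (U l m * U l p) := by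
          refine Finset.sum_congr rfl fun l _ => ?_
          rw [sq, hu, Finset.sum_mul_sum]
          exact Finset.sum_congr rfl fun m _ => Finset.sum_congr rfl fun p _ => by ring
      _ = ∑ m, ∑ p, (U i m * U i p) * (∑ l, U l m * U l p) := by
          rw [Finset.sum_comm]
          refine Finset.sum_congr rfl fun m _ => ?_
          rw [Finset.sum_comm]
          exact Finset.sum_congr rfl fun p _ => (Finset.mul_sum _ _ _).symm
      _ = ∑ m, U i m ^ 2 := by
          refine Finset.sum_congr rfl fun m _ => ?_
          simp [hUe, Finset.sum_ite_eq, sq]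
  have hsum : ∑ l, u l ^ 2 ≤ c := key ▸ hinc i
  calc ∑ k : Fin r, ∑ l : Fin n, (u l * U l k) ^ 2
      = ∑ l, u l ^ 2 * ∑ k, U l k ^ 2 := by
        rw [Finset.sum_comm]
        refine Finset.sum_congr rfl fun l _ => ?_
        rw [Finset.mul_sum]
        exact Finset.sum_congr rfl fun k _ => by ring
    _ ≤ ∑ l, u l ^ 2 * c :=
        Finset.sum_le_sum fun l _ => mul_le_mul_of_nonneg_left (hinc l) (sq_nonneg _)
    _ = (∑ l, u l ^ 2) * c := (Finset.sum_mul _ _ _).symm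
    _ ≤ c * c := mul_le_mul_of_nonneg_right hsum hc0
    _ = c ^ 2 := (sq c).symm
end
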